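/- Let p : (0,1) → [1,∞) be nondecreasing with p(1) < ∞. Suppose there is C > 0 such that for all a ∈ (0,1), ∫_a^1 (a^{1/p'(a)} x^{-1/p'(x)})^{p(x)} dx/x ≤ C. Define φ(t) = t^{-1/p'(t)}. Then there is a constant C₁ > 0 depending only on C and p(1) such that for all 0 < x < 1/4 and all y with x/2 ≤ y ≤ 2x (and y ∈ (0,1)), (1/C₁) φ(x) ≤ φ(y) ≤ C₁ φ(x). -/

import Mathlib

open MeasureTheory Set Real

private lemma pt_pos' {p : ℝ → ℝ} (hp1 : ∀ x ∈ Set.Ioc (0:ℝ) 1, 1 ≤ p x)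
    {t : ℝ} (ht : t ∈ Set.Ioc (0:ℝ) 1) : 0 < p t := lt_of_lt_of_le one_pos (hp1 t ht)

private lemma exp_mem' {p : ℝ → ℝ} (hp1 : ∀ x ∈ Set.Ioc (0:ℝ) 1, 1 ≤ p x)
    {t : ℝ} (ht : t ∈ Set.Ioc (0:ℝ) 1) : -1 ≤ -(1 - 1 / p t) ∧ -(1 - 1 / p t) ≤ 0 := by
  have hpt := hp1 t ht
  have h0 : 0 < p t := lt_of_lt_of_le one_pos hpt
  constructor
  · have : 0 ≤ 1 / p t := by positivity
    linarith
  · have : 1 / p t ≤ 1 := by rw [div_le_one h0]; exact hpt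
    linarith

private lemma key' (p : ℝ → ℝ) (C : ℝ)
    (hmono : MonotoneOn p (Set.Ioc 0 1))
    (hp1 : ∀ x ∈ Set.Ioc (0:ℝ) 1, 1 ≤ p x)
    (hint : ∀ a ∈ Set.Ioo (0:ℝ) 1,
      ∫ x in Set.Ioc a 1,
        (a ^ (1 - 1 / p a) * x ^ (-(1 - 1 / p x))) ^ p x / x ≤ C)
    {a : ℝ} (ha : 0 < a) (ha4 : 4 * a ≤ 1) :
    a ^ (1 / p (2 * a) - 1 / p a) ≤ max 4 (4 * C / Real.log 2) := by
  set D := a ^ (1 / p (2 * a) - 1 / p a) with hD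
  rcases le_or_gt D 4 with h4 | h4
  · exact le_max_of_le_left h4
  have ha1 : a < 1 := by linarith
  have haI : a ∈ Set.Ioc (0:ℝ) 1 := ⟨ha, ha1.le⟩
  have h2aI : 2 * a ∈ Set.Ioc (0:ℝ) 1 := ⟨by linarith, by linarith⟩
  set f : ℝ → ℝ := fun x => (a ^ (1 - 1 / p a) * x ^ (-(1 - 1 / p x))) ^ p x / x with hf
  -- measurability
  have hpm : AEMeasurable p (volume.restrict (Set.Ioc a 1)) :=
    (aemeasurable_restrict_of_monotoneOn measurableSet_Ioc hmono).mono_measure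
      (Measure.restrict_mono (Set.Ioc_subset_Ioc_left ha.le) le_rfl)
  have hfm : AEMeasurable f (volume.restrict (Set.Ioc a 1)) := by
    apply AEMeasurable.div _ aemeasurable_id
    apply AEMeasurable.pow _ hpm
    apply AEMeasurable.const_mul
    exact AEMeasurable.pow aemeasurable_id
      ((aemeasurable_const.sub (aemeasurable_const.div hpm)).neg)
  -- uniform bound on Ioc a 1
  have hbound : ∀ x ∈ Set.Ioc a 1, 0 ≤ f x ∧ f x ≤ a⁻¹ ^ p 1 * a⁻¹ := by
    intro x hx
    have hx0 : 0 < x := lt_trans ha hx.1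
    have hxI : x ∈ Set.Ioc (0:ℝ) 1 := ⟨hx0, hx.2⟩
    have hbase0 : 0 ≤ a ^ (1 - 1 / p a) * x ^ (-(1 - 1 / p x)) := by positivity
    refine ⟨by simp only [hf]; positivity, ?_⟩
    have h1 : a ^ (1 - 1 / p a) ≤ 1 :=
      Real.rpow_le_one ha.le ha1.le (by have := (exp_mem' hp1 haI).2; linarith)
    have h2 : x ^ (-(1 - 1 / p x)) ≤ x⁻¹ := by
      rw [← Real.rpow_neg_one x]
      exact Real.rpow_le_rpow_of_exponent_ge hx0 hx.2 (exp_mem' hp1 hxI).1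
    have h3 : a ^ (1 - 1 / p a) * x ^ (-(1 - 1 / p x)) ≤ a⁻¹ := by
      calc a ^ (1 - 1 / p a) * x ^ (-(1 - 1 / p x)) ≤ 1 * x⁻¹ :=
            mul_le_mul h1 h2 (Real.rpow_nonneg hx0.le _) zero_le_one
        _ = x⁻¹ := one_mul _
        _ ≤ a⁻¹ := by gcongr; exact hx.1.le
    have hainv : (1:ℝ) ≤ a⁻¹ := one_le_inv_iff₀.mpr ⟨ha, ha1.le⟩
    have h4' : (a ^ (1 - 1 / p a) * x ^ (-(1 - 1 / p x))) ^ p x ≤ a⁻¹ ^ p 1 :=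
      calc (a ^ (1 - 1 / p a) * x ^ (-(1 - 1 / p x))) ^ p x
          ≤ a⁻¹ ^ p x := Real.rpow_le_rpow hbase0 h3 (pt_pos' hp1 hxI).le
        _ ≤ a⁻¹ ^ p 1 :=
            Real.rpow_le_rpow_of_exponent_le hainv (hmono hxI ⟨one_pos, le_rfl⟩ hx.2)
    calc f x = (a ^ (1 - 1 / p a) * x ^ (-(1 - 1 / p x))) ^ p x * x⁻¹ := by
          rw [hf]; ring
      _ ≤ a⁻¹ ^ p 1 * a⁻¹ := by
          apply mul_le_mul h4' (by gcongr; exact hx.1.le)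
            (by positivity) (by positivity)
  have hfi : IntegrableOn f (Set.Ioc a 1) := by
    apply Integrable.mono' (integrableOn_const (C := a⁻¹ ^ p 1 * a⁻¹) measure_Ioc_lt_top.ne)
      hfm.aestronglyMeasurable
    filter_upwards [ae_restrict_mem measurableSet_Ioc] with x hx
    rw [Real.norm_of_nonneg (hbound x hx).1]
    exact (hbound x hx).2
  -- pointwise lower bound on Ioc (2a) (4a)
  set g : ℝ → ℝ := fun x => D / 4 / x with hg
  have hsub : Set.Ioc (2*a) (4*a) ⊆ Set.Ioc a 1 := Set.Ioc_subset_Ioc (by linarith) (by linarith)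
  have hgle : ∀ x ∈ Set.Ioc (2*a) (4*a), g x ≤ f x := by
    intro x hx
    have hx0 : 0 < x := lt_trans (by linarith) hx.1
    have hxI : x ∈ Set.Ioc (0:ℝ) 1 := ⟨hx0, le_trans hx.2 ha4⟩
    have hpx := hp1 _ hxI
    have e1 : (4*a) ^ (-(1 - 1 / p x)) ≤ x ^ (-(1 - 1 / p x)) :=
      Real.rpow_le_rpow_of_nonpos hx0 hx.2 (exp_mem' hp1 hxI).2
    have e2 : ((4:ℝ)*a) ^ (-(1 - 1 / p x)) = 4 ^ (-(1 - 1 / p x)) * a ^ (-(1 - 1 / p x)) :=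
      Real.mul_rpow (by norm_num) ha.le
    have e3 : (4:ℝ)⁻¹ ≤ 4 ^ (-(1 - 1 / p x)) := by
      rw [← Real.rpow_neg_one 4]
      exact Real.rpow_le_rpow_of_exponent_le (by norm_num) (exp_mem' hp1 hxI).1
    have e4 : a ^ (-(1 - 1 / p (2*a))) ≤ a ^ (-(1 - 1 / p x)) := by
      apply Real.rpow_le_rpow_of_exponent_ge ha ha1.le
      have hm : p (2*a) ≤ p x := hmono h2aI hxI hx.1.le
      have h1 : 1 / p x ≤ 1 / p (2*a) :=
        one_div_le_one_div_of_le (pt_pos' hp1 h2aI) hm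
      linarith
    have ebase : D / 4 ≤ a ^ (1 - 1 / p a) * x ^ (-(1 - 1 / p x)) := by
      have step : a ^ (1 - 1 / p a) * ((4:ℝ)⁻¹ * a ^ (-(1 - 1 / p (2*a))))
          ≤ a ^ (1 - 1 / p a) * x ^ (-(1 - 1 / p x)) := by
        apply mul_le_mul_of_nonneg_left _ (Real.rpow_nonneg ha.le _)
        calc (4:ℝ)⁻¹ * a ^ (-(1 - 1 / p (2*a)))
            ≤ 4 ^ (-(1 - 1 / p x)) * a ^ (-(1 - 1 / p x)) :=
              mul_le_mul e3 e4 (Real.rpow_nonneg ha.le _) (Real.rpow_nonneg (by norm_num) _)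
          _ = ((4:ℝ)*a) ^ (-(1 - 1 / p x)) := e2.symm
          _ ≤ x ^ (-(1 - 1 / p x)) := e1
      refine le_trans (le_of_eq ?_) step
      have hmul : a ^ (1 - 1 / p a) * a ^ (-(1 - 1 / p (2*a))) = a ^ (1 / p (2*a) - 1 / p a) := by
        rw [← Real.rpow_add ha]; congr 1; ring
      rw [hD, ← hmul]; ring
    have h14 : (1:ℝ) ≤ D / 4 := by linarith
    have hfx : D / 4 ≤ (a ^ (1 - 1 / p a) * x ^ (-(1 - 1 / p x))) ^ p x :=
      calc D / 4 = (D/4) ^ (1:ℝ) := (Real.rpow_one _).symm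
        _ ≤ (D/4) ^ p x := Real.rpow_le_rpow_of_exponent_le h14 hpx
        _ ≤ _ := Real.rpow_le_rpow (by linarith) ebase (by linarith)
    show D / 4 / x ≤ (a ^ (1 - 1 / p a) * x ^ (-(1 - 1 / p x))) ^ p x / x
    gcongr
  -- integrability of g
  have hgi : IntegrableOn g (Set.Ioc (2*a) (4*a)) := by
    apply Integrable.mono'
      (integrableOn_const measure_Ioc_lt_top.ne :
        IntegrableOn (fun _ => D / 4 / (2*a)) (Set.Ioc (2*a) (4*a)) volume)
      ((measurable_const.div measurable_id).aestronglyMeasurable)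
    filter_upwards [ae_restrict_mem measurableSet_Ioc] with x hx
    have hx0 : 0 < x := lt_trans (by linarith) hx.1
    have hD0 : 0 ≤ D := Real.rpow_nonneg ha.le _
    show ‖D / 4 / x‖ ≤ D / 4 / (2*a)
    rw [Real.norm_of_nonneg (by positivity)]
    exact div_le_div_of_nonneg_left (by positivity) (by linarith) hx.1.le
  -- compute the integral of g
  have hI : ∫ x in Set.Ioc (2*a) (4*a), g x = D / 4 * Real.log 2 := by
    rw [← intervalIntegral.integral_of_le (by linarith : 2*a ≤ 4*a)]
    have hgx : ∀ x : ℝ, g x = D / 4 * (1 / x) := fun x => by rw [hg]; ring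
    simp_rw [hgx]
    rw [intervalIntegral.integral_const_mul, integral_one_div
      (Set.notMem_uIcc_of_lt (by linarith) (by linarith))]
    congr 1
    rw [show (4*a)/(2*a) = 2 by field_simp; ring]
  have chain : D / 4 * Real.log 2 ≤ C := by
    calc D / 4 * Real.log 2 = ∫ x in Set.Ioc (2*a) (4*a), g x := hI.symm
      _ ≤ ∫ x in Set.Ioc (2*a) (4*a), f x :=
          setIntegral_mono_on hgi (hfi.mono_set hsub) measurableSet_Ioc hgle
      _ ≤ ∫ x in Set.Ioc a 1, f x := by
          apply setIntegral_mono_set hfi ?_ (HasSubset.Subset.eventuallyLE hsub)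
          filter_upwards [ae_restrict_mem measurableSet_Ioc] with x hx using (hbound x hx).1
      _ ≤ C := hint a ⟨ha, ha1⟩
  have hlog : 0 < Real.log 2 := Real.log_pos one_lt_two
  refine le_max_of_le_right ?_
  rw [le_div_iff₀ hlog]
  nlinarith

private lemma doubling' (p : ℝ → ℝ)
    (hmono : MonotoneOn p (Set.Ioc 0 1))
    (hp1 : ∀ x ∈ Set.Ioc (0:ℝ) 1, 1 ≤ p x)
    {a b : ℝ} (ha : 0 < a) (hab : a ≤ b) (hb2 : b ≤ 2*a) (ha4 : 4*a ≤ 1) :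
    a ^ (-(1 - 1 / p a)) / 2 ≤ b ^ (-(1 - 1 / p b)) ∧
    b ^ (-(1 - 1 / p b)) ≤ a ^ (1 / p (2*a) - 1 / p a) * a ^ (-(1 - 1 / p a)) := by
  have ha1 : a ≤ 1 := by linarith
  have hb0 : 0 < b := lt_of_lt_of_le ha hab
  have haI : a ∈ Set.Ioc (0:ℝ) 1 := ⟨ha, ha1⟩
  have hbI : b ∈ Set.Ioc (0:ℝ) 1 := ⟨hb0, by linarith⟩
  have h2aI : 2*a ∈ Set.Ioc (0:ℝ) 1 := ⟨by linarith, by linarith⟩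
  have hpa := pt_pos' hp1 haI
  have hpb := pt_pos' hp1 hbI
  have hp2a := pt_pos' hp1 h2aI
  have hEab : -(1 - 1 / p b) ≤ -(1 - 1 / p a) := by
    have : 1 / p b ≤ 1 / p a := one_div_le_one_div_of_le hpa (hmono haI hbI hab)
    linarith
  have hE2b : -(1 - 1 / p (2*a)) ≤ -(1 - 1 / p b) := by
    have : 1 / p (2*a) ≤ 1 / p b := one_div_le_one_div_of_le hpb (hmono hbI h2aI hb2)
    linarith
  constructor
  · -- lower bound
    have s1 : (2*a) ^ (-(1 - 1 / p b)) ≤ b ^ (-(1 - 1 / p b)) :=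
      Real.rpow_le_rpow_of_nonpos hb0 hb2 (exp_mem' hp1 hbI).2
    have s2 : (2*a) ^ (-(1 - 1 / p a)) ≤ (2*a) ^ (-(1 - 1 / p b)) :=
      Real.rpow_le_rpow_of_exponent_ge (by linarith) (by linarith) hEab
    have s3 : ((2:ℝ)*a) ^ (-(1 - 1 / p a)) = 2 ^ (-(1 - 1 / p a)) * a ^ (-(1 - 1 / p a)) :=
      Real.mul_rpow (by norm_num) ha.le
    have s4 : (2:ℝ)⁻¹ ≤ 2 ^ (-(1 - 1 / p a)) := by
      rw [← Real.rpow_neg_one 2]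
      exact Real.rpow_le_rpow_of_exponent_le one_le_two (exp_mem' hp1 haI).1
    calc a ^ (-(1 - 1 / p a)) / 2 = (2:ℝ)⁻¹ * a ^ (-(1 - 1 / p a)) := by ring
      _ ≤ 2 ^ (-(1 - 1 / p a)) * a ^ (-(1 - 1 / p a)) :=
          mul_le_mul_of_nonneg_right s4 (Real.rpow_nonneg ha.le _)
      _ = ((2:ℝ)*a) ^ (-(1 - 1 / p a)) := s3.symm
      _ ≤ (2*a) ^ (-(1 - 1 / p b)) := s2
      _ ≤ b ^ (-(1 - 1 / p b)) := s1
  · -- upper bound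
    have t1 : b ^ (-(1 - 1 / p b)) ≤ a ^ (-(1 - 1 / p b)) :=
      Real.rpow_le_rpow_of_nonpos ha hab (exp_mem' hp1 hbI).2
    have t2 : a ^ (-(1 - 1 / p b)) ≤ a ^ (-(1 - 1 / p (2*a))) :=
      Real.rpow_le_rpow_of_exponent_ge ha ha1 hE2b
    have t3 : a ^ (-(1 - 1 / p (2*a))) = a ^ (1 / p (2*a) - 1 / p a) * a ^ (-(1 - 1 / p a)) := by
      rw [← Real.rpow_add ha]; congr 1; ring
    calc b ^ (-(1 - 1 / p b)) ≤ a ^ (-(1 - 1 / p b)) := t1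
      _ ≤ a ^ (-(1 - 1 / p (2*a))) := t2
      _ = _ := t3

/-- Lemma 3.2: under the modular integral condition the function
`φ(t) = t^{-1/p'(t)}` is doubling near the origin. -/
theorem stmt_1 (p : ℝ → ℝ) (C : ℝ)
    (hmono : MonotoneOn p (Set.Ioc 0 1))
    (hp1 : ∀ x ∈ Set.Ioc (0:ℝ) 1, 1 ≤ p x)
    (hC : 0 < C)
    (hint : ∀ a ∈ Set.Ioo (0:ℝ) 1,
      ∫ x in Set.Ioc a 1,
        (a ^ (1 - 1 / p a) * x ^ (-(1 - 1 / p x))) ^ p x / x ≤ C) :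
    ∃ C₁ > 0, ∀ x ∈ Set.Ioo (0:ℝ) (1/4), ∀ y ∈ Set.Ioo (0:ℝ) 1,
      x / 2 ≤ y → y ≤ 2 * x →
        x ^ (-(1 - 1 / p x)) / C₁ ≤ y ^ (-(1 - 1 / p y)) ∧
        y ^ (-(1 - 1 / p y)) ≤ C₁ * x ^ (-(1 - 1 / p x)) := by
  set K := max 4 (4 * C / Real.log 2) with hK
  have hK4 : (4:ℝ) ≤ K := le_max_left _ _
  have hK0 : (0:ℝ) < K := by linarith
  refine ⟨K, hK0, ?_⟩
  intro x hx y hy hxy hyx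
  have hx0 := hx.1
  have hx4 : x < 1/4 := hx.2
  have hy0 := hy.1
  rcases le_total x y with h | h
  · -- x ≤ y ≤ 2x
    have h4x : 4 * x ≤ 1 := by linarith
    obtain ⟨hl, hu⟩ := doubling' p hmono hp1 hx0 h hyx h4x
    have hkey := key' p C hmono hp1 hint hx0 h4x
    have hxE : 0 ≤ x ^ (-(1 - 1 / p x)) := Real.rpow_nonneg hx0.le _
    constructor
    · calc x ^ (-(1 - 1 / p x)) / K ≤ x ^ (-(1 - 1 / p x)) / 2 := by
            apply div_le_div_of_nonneg_left hxE ?_ ?_ <;> linarith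
        _ ≤ _ := hl
    · calc y ^ (-(1 - 1 / p y)) ≤ x ^ (1 / p (2*x) - 1 / p x) * x ^ (-(1 - 1 / p x)) := hu
        _ ≤ K * x ^ (-(1 - 1 / p x)) := mul_le_mul_of_nonneg_right hkey hxE
  · -- y ≤ x ≤ 2y
    have h2 : x ≤ 2 * y := by linarith
    have h4y : 4 * y ≤ 1 := by linarith
    obtain ⟨hl, hu⟩ := doubling' p hmono hp1 hy0 h h2 h4y
    have hkey := key' p C hmono hp1 hint hy0 h4y
    have hyE : 0 ≤ y ^ (-(1 - 1 / p y)) := Real.rpow_nonneg hy0.le _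
    have hxE : 0 ≤ x ^ (-(1 - 1 / p x)) := Real.rpow_nonneg hx0.le _
    constructor
    · -- x^{Ex} ≤ K * y^{Ey}
      rw [div_le_iff₀ hK0]
      calc x ^ (-(1 - 1 / p x)) ≤ y ^ (1 / p (2*y) - 1 / p y) * y ^ (-(1 - 1 / p y)) := hu
        _ ≤ K * y ^ (-(1 - 1 / p y)) := mul_le_mul_of_nonneg_right hkey hyE
        _ = y ^ (-(1 - 1 / p y)) * K := by ring
    · calc y ^ (-(1 - 1 / p y)) ≤ 2 * x ^ (-(1 - 1 / p x)) := by linarith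
        _ ≤ K * x ^ (-(1 - 1 / p x)) := by nlinarith
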